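/- Let A, B ∈ ℂ^{n×n} be such that the pencil zB − A is regular, i.e., there exists z₀ ∈ ℂ with det(z₀B − A) ≠ 0. Then there exist an integer d with 0 ≤ d ≤ n, invertible matrices S, T ∈ ℂ^{n×n}, an upper triangular matrix J ∈ ℂ^{d×d}, and a nilpotent upper triangular matrix N ∈ ℂ^{(n−d)×(n−d)} such that T·A·S equals the block diagonal matrix diag(J, I_{n−d}) and T·B·S equals the block diagonal matrix diag(I_d, N). -/

import Mathlib

open Matrix Polynomial
namespace WAux

def lift {m : ℕ} (a : ℂ) (M : Matrix (Fin m) (Fin m) ℂ) :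
    Matrix (Fin (m + 1)) (Fin (m + 1)) ℂ :=
  Matrix.of fun i j =>
    Fin.cases (Fin.cases a (fun _ => 0) j) (fun i' => Fin.cases 0 (fun j' => M i' j') j) i

variable {m : ℕ} {a b : ℂ} {M N : Matrix (Fin m) (Fin m) ℂ}

@[simp] lemma lift_zero_zero : lift a M 0 0 = a := rfl
@[simp] lemma lift_zero_succ (j : Fin m) : lift a M 0 j.succ = 0 := rfl
@[simp] lemma lift_succ_zero (i : Fin m) : lift a M i.succ 0 = 0 := rfl
@[simp] lemma lift_succ_succ (i j : Fin m) : lift a M i.succ j.succ = M i j := rfl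

lemma lift_mul : lift a M * lift b N = lift (a * b) (M * N) := by
  ext i j
  refine Fin.cases ?_ (fun i' => ?_) i <;> refine Fin.cases ?_ (fun j' => ?_) j <;>
    simp [Matrix.mul_apply, Fin.sum_univ_succ]

lemma lift_one : lift 1 (1 : Matrix (Fin m) (Fin m) ℂ) = 1 := by
  ext i j
  refine Fin.cases ?_ (fun i' => ?_) i <;> refine Fin.cases ?_ (fun j' => ?_) j <;>
    simp [Matrix.one_apply, Fin.succ_ne_zero, (Fin.succ_ne_zero _).symm, Fin.succ_inj]

/-- given `D` with first column `x • e₀`, conjugating by `lift 1 Q'` keeps the first column and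
conjugates the lower-right block. -/
lemma assemble {x : ℂ} (D : Matrix (Fin (m + 1)) (Fin (m + 1)) ℂ)
    (hcol : ∀ i, D i 0 = if i = 0 then x else 0)
    (Q' : (Matrix (Fin m) (Fin m) ℂ)ˣ) :
    ∃ Q : (Matrix (Fin (m + 1)) (Fin (m + 1)) ℂ)ˣ,
      (∀ i, (Q⁻¹.val * D * Q.val) i 0 = if i = 0 then x else 0) ∧
      (Q⁻¹.val * D * Q.val).submatrix Fin.succ Fin.succ
        = Q'⁻¹.val * D.submatrix Fin.succ Fin.succ * Q'.val := by
  refine ⟨⟨lift 1 Q'.val, lift 1 Q'⁻¹.val, ?_, ?_⟩, ?_, ?_⟩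
  · rw [lift_mul, ← Units.val_mul, mul_inv_cancel, Units.val_one, one_mul, lift_one]
  · rw [lift_mul, ← Units.val_mul, inv_mul_cancel, Units.val_one, one_mul, lift_one]
  · intro i
    show (lift 1 Q'⁻¹.val * D * lift 1 Q'.val) i 0 = _
    have h1 : ∀ k : Fin (m + 1), (lift 1 Q'.val) k 0 = if k = 0 then 1 else 0 := by
      intro k
      refine Fin.cases ?_ (fun k' => ?_) k <;> simp [Fin.succ_ne_zero]
    rw [Matrix.mul_apply]
    rw [Finset.sum_eq_single 0 (fun k _ hk => by
          rw [h1 k, if_neg hk, mul_zero]) (by simp)]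
    rw [h1 0, if_pos rfl, mul_one, Matrix.mul_apply]
    rw [Finset.sum_eq_single 0 (fun k _ hk => by
          rw [hcol k, if_neg hk, mul_zero]) (by simp)]
    rw [hcol 0, if_pos rfl]
    refine Fin.cases ?_ (fun i' => ?_) i <;> simp [Fin.succ_ne_zero]
  · ext i j
    show (lift 1 Q'⁻¹.val * D * lift 1 Q'.val) i.succ j.succ = _
    simp only [Matrix.mul_apply, Matrix.submatrix_apply, Fin.sum_univ_succ, lift_succ_zero,
      lift_zero_succ, lift_succ_succ, zero_mul, mul_zero, zero_add, add_zero,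
      Finset.sum_mul, Finset.mul_sum]
    rw [Finset.sum_comm]
    simp

/-- determinant factorization along a first column equal to `x • e₀` -/
lemma det_factor {μ : ℂ} (D : Matrix (Fin (m + 1)) (Fin (m + 1)) ℂ)
    (hcol : ∀ i, D i 0 = if i = 0 then μ else 0) (x : ℂ) :
    (x • (1 : Matrix (Fin (m + 1)) (Fin (m + 1)) ℂ) - D).det
      = (x - μ) * (x • (1 : Matrix (Fin m) (Fin m) ℂ) - D.submatrix Fin.succ Fin.succ).det := by
  set M := x • (1 : Matrix (Fin (m + 1)) (Fin (m + 1)) ℂ) - D with hM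
  have hMcol : ∀ i, M i 0 = if i = 0 then x - μ else 0 := by
    intro i
    refine Fin.cases ?_ (fun i' => ?_) i <;>
      simp [hM, hcol, Matrix.one_apply, Fin.succ_ne_zero]
  rw [Matrix.det_succ_column_zero]
  rw [Finset.sum_eq_single 0 (fun k _ hk => by rw [hMcol k, if_neg hk]; ring) (by simp)]
  rw [hMcol 0, if_pos rfl]
  simp only [Fin.val_zero, pow_zero, one_mul]
  congr 1
  have hsub : M.submatrix (Fin.succAbove 0) Fin.succ
      = x • (1 : Matrix (Fin m) (Fin m) ℂ) - D.submatrix Fin.succ Fin.succ := by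
    ext i j
    simp [hM, Matrix.one_apply, Fin.succ_inj, Fin.succAbove_zero]
  rw [hsub]
lemma det_smul_one_sub_eq {m : ℕ} (C : Matrix (Fin m) (Fin m) ℂ) (x : ℂ) :
    (x • (1 : Matrix (Fin m) (Fin m) ℂ) - C).det = C.charpoly.eval x := by
  rw [Matrix.charpoly, ← Polynomial.coe_evalRingHom, RingHom.map_det]
  congr 1
  ext i j
  by_cases h : i = j <;>
    simp [h, charmatrix_apply, Matrix.one_apply, Matrix.diagonal_apply, RingHom.mapMatrix_apply]

lemma exists_eigenvalue {m : ℕ} (C : Matrix (Fin (m + 1)) (Fin (m + 1)) ℂ) :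
    ∃ x : ℂ, (x • (1 : Matrix (Fin (m + 1)) (Fin (m + 1)) ℂ) - C).det = 0 := by
  obtain ⟨x, hx⟩ := Complex.exists_root (f := C.charpoly) (by
    rw [Matrix.charpoly_degree_eq_dim, Fintype.card_fin]
    exact_mod_cast m.succ_pos)
  exact ⟨x, by rw [det_smul_one_sub_eq]; exact hx⟩

lemma exists_eigenvector {m : ℕ} {C : Matrix (Fin m) (Fin m) ℂ} {x : ℂ}
    (h : (x • (1 : Matrix (Fin m) (Fin m) ℂ) - C).det = 0) :
    ∃ v : Fin m → ℂ, v ≠ 0 ∧ C.mulVec v = x • v := by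
  obtain ⟨v, hv, hv2⟩ := (Matrix.exists_mulVec_eq_zero_iff).mpr h
  refine ⟨v, hv, ?_⟩
  rw [Matrix.sub_mulVec, Matrix.smul_mulVec, Matrix.one_mulVec, sub_eq_zero] at hv2
  exact hv2.symm

lemma det_conj {m : ℕ} (Q : (Matrix (Fin m) (Fin m) ℂ)ˣ) (C : Matrix (Fin m) (Fin m) ℂ) (x : ℂ) :
    (x • (1 : Matrix (Fin m) (Fin m) ℂ) - Q⁻¹.val * C * Q.val).det
      = (x • (1 : Matrix (Fin m) (Fin m) ℂ) - C).det := by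
  have h1 : x • (1 : Matrix (Fin m) (Fin m) ℂ) - Q⁻¹.val * C * Q.val
      = Q⁻¹.val * (x • (1 : Matrix (Fin m) (Fin m) ℂ) - C) * Q.val := by
    rw [mul_sub, sub_mul]
    congr 1
    rw [Matrix.mul_smul, Matrix.smul_mul, mul_one]
    congr 1
    rw [← Units.val_mul, inv_mul_cancel, Units.val_one]
  rw [h1, Matrix.det_mul, Matrix.det_mul, mul_comm ((Q⁻¹.val : Matrix _ _ ℂ).det), mul_assoc,
    ← Matrix.det_mul, ← Units.val_mul, inv_mul_cancel]
  simp

/-- key step: conjugate `C` so that the first column becomes `x • e₀`. -/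
lemma step {m : ℕ} (C : Matrix (Fin (m + 1)) (Fin (m + 1)) ℂ) {x : ℂ} {v : Fin (m + 1) → ℂ}
    (hv : v ≠ 0) (h : C.mulVec v = x • v) :
    ∃ Q : (Matrix (Fin (m + 1)) (Fin (m + 1)) ℂ)ˣ,
      ∀ i, (Q⁻¹.val * C * Q.val) i 0 = if i = 0 then x else 0 := by
  obtain ⟨i₀, hi₀⟩ := Function.ne_iff.mp hv
  simp only [Pi.zero_apply] at hi₀
  set P : Matrix (Fin (m + 1)) (Fin (m + 1)) ℂ :=
    ((1 : Matrix (Fin (m + 1)) (Fin (m + 1)) ℂ).updateCol i₀ v).submatrix id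
      (Equiv.swap 0 i₀) with hP
  have hdet : IsUnit P.det := by
    have hud : ((1 : Matrix (Fin (m + 1)) (Fin (m + 1)) ℂ).updateCol i₀ v).det = v i₀ := by
      rw [← Matrix.cramer_apply, Matrix.cramer_one]; rfl
    rw [hP, Matrix.det_permute', hud]
    exact (IsUnit.mul_iff.mpr ⟨by simp, Ne.isUnit hi₀⟩)
  obtain ⟨Q, hQ⟩ := (Matrix.isUnit_iff_isUnit_det P).mpr hdet
  have hQcol : Q.val.mulVec (Pi.single 0 1) = v := by
    rw [hQ]
    funext j
    simp [Matrix.mulVec_single, hP, Matrix.updateCol_apply]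
  have key : (Q⁻¹.val * C * Q.val).mulVec (Pi.single 0 1) = x • (Pi.single 0 1 : Fin (m + 1) → ℂ) := by
    have h2 : Q⁻¹.val *ᵥ v = (Pi.single 0 1 : Fin (m + 1) → ℂ) := by
      rw [← hQcol, Matrix.mulVec_mulVec, ← Units.val_mul, inv_mul_cancel, Units.val_one,
        Matrix.one_mulVec]
    rw [← Matrix.mulVec_mulVec, ← Matrix.mulVec_mulVec, hQcol, h, Matrix.mulVec_smul, h2]
  refine ⟨Q, fun i => ?_⟩
  have := congrFun key i
  simpa [Matrix.mulVec_single, Pi.single_apply, eq_comm] using this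

lemma coreZero : ∀ (m : ℕ) (C : Matrix (Fin m) (Fin m) ℂ),
    (∀ x : ℂ, (x • (1 : Matrix (Fin m) (Fin m) ℂ) - C).det = 0 → x = 0) →
    ∃ Q : (Matrix (Fin m) (Fin m) ℂ)ˣ,
      (Q⁻¹.val * C * Q.val).BlockTriangular id ∧ ∀ i, (Q⁻¹.val * C * Q.val) i i = 0
  | 0, C, _ => ⟨1, fun i => i.elim0, fun i => i.elim0⟩
  | (m + 1), C, hz => by
    obtain ⟨x, hx⟩ := exists_eigenvalue C
    have hx0 := hz x hx
    subst hx0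
    obtain ⟨v, hv, hCv⟩ := exists_eigenvector hx
    obtain ⟨Q₁, hQ₁⟩ := step C hv hCv
    set D := Q₁⁻¹.val * C * Q₁.val with hD
    set C' := D.submatrix Fin.succ Fin.succ with hC'
    have hz' : ∀ x : ℂ, (x • (1 : Matrix (Fin m) (Fin m) ℂ) - C').det = 0 → x = 0 := by
      intro x hx'
      apply hz x
      rw [← det_conj Q₁ C x, det_factor D hQ₁ x, hx', mul_zero]
    obtain ⟨Q', hQt, hQd⟩ := coreZero m C' hz'
    obtain ⟨Q₂, h2col, h2sub⟩ := assemble D hQ₁ Q'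
    have hE : (Q₁ * Q₂)⁻¹.val * C * (Q₁ * Q₂).val = Q₂⁻¹.val * D * Q₂.val := by
      simp only [_root_.mul_inv_rev, Units.val_mul, hD, Matrix.mul_assoc]
    refine ⟨Q₁ * Q₂, ?_, ?_⟩ <;> rw [hE]
    · intro i j hij
      induction j using Fin.cases with
      | zero =>
        rw [h2col i, if_neg]
        rintro rfl
        exact absurd hij (lt_irrefl _)
      | succ j' =>
        induction i using Fin.cases with
        | zero => exact absurd hij (by simp [Fin.le_zero_iff, not_lt, Fin.zero_le])
        | succ i' =>
          have : (Q'⁻¹.val * C' * Q'.val) i' j' = 0 :=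
            hQt (show (id j' : Fin m) < id i' from Fin.succ_lt_succ_iff.mp hij)
          calc (Q₂⁻¹.val * D * Q₂.val) i'.succ j'.succ
              = ((Q₂⁻¹.val * D * Q₂.val).submatrix Fin.succ Fin.succ) i' j' := rfl
            _ = 0 := by rw [h2sub]; exact this
    · intro i
      induction i using Fin.cases with
      | zero => rw [h2col 0]; simp
      | succ i' =>
        calc (Q₂⁻¹.val * D * Q₂.val) i'.succ i'.succ
            = ((Q₂⁻¹.val * D * Q₂.val).submatrix Fin.succ Fin.succ) i' i' := rfl
          _ = 0 := by rw [h2sub]; exact hQd i'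

lemma core : ∀ (m : ℕ) (C : Matrix (Fin m) (Fin m) ℂ),
    ∃ (Q : (Matrix (Fin m) (Fin m) ℂ)ˣ) (d : ℕ), d ≤ m ∧
      (Q⁻¹.val * C * Q.val).BlockTriangular id ∧
      ∀ i : Fin m, ((Q⁻¹.val * C * Q.val) i i ≠ 0 ↔ (i : ℕ) < d)
  | 0, C => ⟨1, 0, le_refl 0, fun i => i.elim0, fun i => i.elim0⟩
  | (m + 1), C => by
    by_cases hz : ∃ x : ℂ, x ≠ 0 ∧ (x • (1 : Matrix (Fin (m+1)) (Fin (m+1)) ℂ) - C).det = 0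
    · obtain ⟨x, hx0, hx⟩ := hz
      obtain ⟨v, hv, hCv⟩ := exists_eigenvector hx
      obtain ⟨Q₁, hQ₁⟩ := step C hv hCv
      set D := Q₁⁻¹.val * C * Q₁.val with hD
      set C' := D.submatrix Fin.succ Fin.succ with hC'
      obtain ⟨Q', d', hd', hQt, hQd⟩ := core m C'
      obtain ⟨Q₂, h2col, h2sub⟩ := assemble D hQ₁ Q'
      have hE : (Q₁ * Q₂)⁻¹.val * C * (Q₁ * Q₂).val = Q₂⁻¹.val * D * Q₂.val := by
        simp only [_root_.mul_inv_rev, Units.val_mul, hD, Matrix.mul_assoc]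
      refine ⟨Q₁ * Q₂, d' + 1, by omega, ?_, ?_⟩ <;> rw [hE]
      · intro i j hij
        induction j using Fin.cases with
        | zero =>
          rw [h2col i, if_neg]
          rintro rfl
          exact absurd hij (lt_irrefl _)
        | succ j' =>
          induction i using Fin.cases with
          | zero => exact absurd hij (by simp [Fin.le_zero_iff, not_lt, Fin.zero_le])
          | succ i' =>
            have : (Q'⁻¹.val * C' * Q'.val) i' j' = 0 :=
              hQt (show (id j' : Fin m) < id i' from Fin.succ_lt_succ_iff.mp hij)
            calc (Q₂⁻¹.val * D * Q₂.val) i'.succ j'.succ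
                = ((Q₂⁻¹.val * D * Q₂.val).submatrix Fin.succ Fin.succ) i' j' := rfl
              _ = 0 := by rw [h2sub]; exact this
      · intro i
        induction i using Fin.cases with
        | zero =>
          rw [h2col 0, if_pos rfl]
          simpa using hx0
        | succ i' =>
          have : (Q₂⁻¹.val * D * Q₂.val) i'.succ i'.succ = (Q'⁻¹.val * C' * Q'.val) i' i' := by
            calc (Q₂⁻¹.val * D * Q₂.val) i'.succ i'.succ
                = ((Q₂⁻¹.val * D * Q₂.val).submatrix Fin.succ Fin.succ) i' i' := rfl
              _ = _ := by rw [h2sub]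
          rw [this]
          rw [hQd i']
          simp only [Fin.val_succ]
          omega
    · push_neg at hz
      have hz' : ∀ x : ℂ, (x • (1 : Matrix (Fin (m+1)) (Fin (m+1)) ℂ) - C).det = 0 → x = 0 := by
        intro x hx
        by_contra hne
        exact hz x hne hx
      obtain ⟨Q, hQt, hQd⟩ := coreZero (m + 1) C hz'
      exact ⟨Q, 0, Nat.zero_le _, hQt, fun i => by rw [hQd i]; simp⟩

lemma nilpotent_of_triangular_diag_zero {e : ℕ} (N : Matrix (Fin e) (Fin e) ℂ)
    (ht : N.BlockTriangular id) (hd : ∀ i, N i i = 0) : N ^ e = 0 := by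
  have hcp : N.charpoly = X ^ e := by
    rw [Matrix.charpoly, Matrix.det_of_upperTriangular ht.charmatrix]
    simp only [charmatrix_apply_eq, hd, map_zero, sub_zero]
    rw [Finset.prod_const, Finset.card_univ, Fintype.card_fin]
  have h := N.aeval_self_charpoly
  rwa [hcp, map_pow, aeval_X] at h

end WAux

open WAux in
theorem stmt_1 (n : ℕ) (A B : Matrix (Fin n) (Fin n) ℂ)
    (hreg : ∃ z₀ : ℂ, (z₀ • B - A).det ≠ 0) :
    ∃ (d : ℕ) (hd : d ≤ n) (S T : Matrix (Fin n) (Fin n) ℂ)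
      (J : Matrix (Fin d) (Fin d) ℂ)
      (N : Matrix (Fin (n - d)) (Fin (n - d)) ℂ),
      IsUnit S ∧ IsUnit T ∧
      J.BlockTriangular id ∧
      N.BlockTriangular id ∧ IsNilpotent N ∧
      T * A * S =
        (Matrix.reindex (finSumFinEquiv.trans (finCongr (Nat.add_sub_cancel' hd)))
          (finSumFinEquiv.trans (finCongr (Nat.add_sub_cancel' hd))))
          (Matrix.fromBlocks J 0 0 1) ∧
      T * B * S =
        (Matrix.reindex (finSumFinEquiv.trans (finCongr (Nat.add_sub_cancel' hd)))
          (finSumFinEquiv.trans (finCongr (Nat.add_sub_cancel' hd))))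
          (Matrix.fromBlocks 1 0 0 N) := by
  classical
  obtain ⟨z₀, hdet⟩ := hreg
  obtain ⟨Ku, hKu⟩ := (Matrix.isUnit_iff_isUnit_det _).mpr (Ne.isUnit hdet)
  set C : Matrix (Fin n) (Fin n) ℂ := Ku⁻¹.val * B with hC
  obtain ⟨Q, d, hd, hQt, hQd⟩ := core n C
  set E : Matrix (Fin n) (Fin n) ℂ := Q⁻¹.val * C * Q.val with hE
  set e : ℕ := n - d with he
  set Φ : Fin d ⊕ Fin e ≃ Fin n :=
    finSumFinEquiv.trans (finCongr (Nat.add_sub_cancel' hd)) with hΦ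
  have hΦl : ∀ i : Fin d, ((Φ (Sum.inl i) : Fin n) : ℕ) = (i : ℕ) := by
    intro i; simp [hΦ]
  have hΦr : ∀ i : Fin e, ((Φ (Sum.inr i) : Fin n) : ℕ) = d + (i : ℕ) := by
    intro i; simp [hΦ]
  set U : Matrix (Fin d) (Fin d) ℂ :=
    Matrix.of fun i j => E (Φ (Sum.inl i)) (Φ (Sum.inl j)) with hU
  set W : Matrix (Fin d) (Fin e) ℂ :=
    Matrix.of fun i j => E (Φ (Sum.inl i)) (Φ (Sum.inr j)) with hW
  set N₀ : Matrix (Fin e) (Fin e) ℂ :=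
    Matrix.of fun i j => E (Φ (Sum.inr i)) (Φ (Sum.inr j)) with hN₀
  -- block decomposition of E
  have hEblocks : E = (Matrix.reindex Φ Φ) (Matrix.fromBlocks U W 0 N₀) := by
    apply Matrix.ext
    intro i j
    obtain ⟨i', rfl⟩ := Φ.surjective i
    obtain ⟨j', rfl⟩ := Φ.surjective j
    rw [Matrix.reindex_apply, Matrix.submatrix_apply, Equiv.symm_apply_apply,
      Equiv.symm_apply_apply]
    cases i' with
    | inl i' =>
      cases j' with
      | inl j' => simp [hU]
      | inr j' => simp [hW]
    | inr i' =>
      cases j' with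
      | inl j' =>
        have : (Φ (Sum.inl j') : Fin n) < Φ (Sum.inr i') := by
          rw [Fin.lt_def, hΦl, hΦr]
          have := j'.isLt
          omega
        simp [Matrix.fromBlocks, hQt this]
      | inr j' => simp [hN₀]
  -- triangularity and diagonal facts
  have hUt : U.BlockTriangular id := by
    intro i j hij
    refine hQt ?_
    rw [id, id, Fin.lt_def, hΦl, hΦl]
    exact hij
  have hN₀t : N₀.BlockTriangular id := by
    intro i j hij
    refine hQt ?_
    have hij' : (j : ℕ) < (i : ℕ) := hij
    rw [id, id, Fin.lt_def, hΦr, hΦr]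
    omega
  have hUd : ∀ i, U i i ≠ 0 := by
    intro i
    refine (hQd (Φ (Sum.inl i))).mpr ?_
    rw [hΦl]
    exact i.isLt
  have hN₀d : ∀ i, N₀ i i = 0 := by
    intro i
    by_contra hne
    have := (hQd (Φ (Sum.inr i))).mp hne
    rw [hΦr] at this
    omega
  have hUdet : IsUnit U.det := by
    rw [Matrix.det_of_upperTriangular hUt]
    exact isUnit_iff_ne_zero.mpr (Finset.prod_ne_zero_iff.mpr fun i _ => hUd i)
  have hN₀e : N₀ ^ e = 0 := nilpotent_of_triangular_diag_zero N₀ hN₀t hN₀d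
  -- the matrix V = z₀ • N₀ - 1
  set V : Matrix (Fin e) (Fin e) ℂ := z₀ • N₀ - 1 with hV
  have hVt : V.BlockTriangular id := by
    intro i j hij
    have h1 : N₀ i j = 0 := hN₀t hij
    have h2 : i ≠ j := fun hh => absurd hij (by rw [hh]; exact lt_irrefl _)
    simp [hV, h1, Matrix.one_apply_ne h2]
  have hVd : ∀ i, V i i = -1 := by
    intro i
    simp [hV, hN₀d i]
  have hVdet : IsUnit V.det := by
    rw [Matrix.det_of_upperTriangular hVt]
    simp [hVd]
  have hUU : U * U⁻¹ = 1 := Matrix.mul_nonsing_inv U hUdet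
  have hUU' : U⁻¹ * U = 1 := Matrix.nonsing_inv_mul U hUdet
  have hVV : V * V⁻¹ = 1 := Matrix.mul_nonsing_inv V hVdet
  have hVV' : V⁻¹ * V = 1 := Matrix.nonsing_inv_mul V hVdet
  have hVcomm : V * N₀ = N₀ * V := by
    rw [hV, sub_mul, mul_sub, Matrix.smul_mul, Matrix.mul_smul, one_mul, mul_one]
  have hVicomm : V⁻¹ * N₀ = N₀ * V⁻¹ := by
    calc V⁻¹ * N₀ = V⁻¹ * N₀ * (V * V⁻¹) := by rw [hVV, mul_one]
      _ = V⁻¹ * (N₀ * V) * V⁻¹ := by simp only [Matrix.mul_assoc]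
      _ = V⁻¹ * (V * N₀) * V⁻¹ := by rw [hVcomm]
      _ = (V⁻¹ * V) * N₀ * V⁻¹ := by simp only [Matrix.mul_assoc]
      _ = N₀ * V⁻¹ := by rw [hVV', one_mul]
  haveI : Invertible U := U.invertibleOfIsUnitDet hUdet
  haveI : Invertible V := V.invertibleOfIsUnitDet hVdet
  set N : Matrix (Fin e) (Fin e) ℂ := V⁻¹ * N₀ with hN
  have hNt : N.BlockTriangular id :=
    (Matrix.blockTriangular_inv_of_blockTriangular hVt).mul hN₀t
  have hNnil : IsNilpotent N := by
    refine ⟨e, ?_⟩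
    rw [hN, (Commute.mul_pow (by exact hVicomm) e : (V⁻¹ * N₀) ^ e = (V⁻¹) ^ e * N₀ ^ e),
      hN₀e, mul_zero]
  -- Sylvester equation
  set Xs : Matrix (Fin d) (Fin e) ℂ :=
    -∑ k ∈ Finset.range e, (U⁻¹) ^ (k + 1) * W * N₀ ^ k with hXs
  have key : U * Xs - Xs * N₀ = -W := by
    have h1 : U * Xs = -∑ k ∈ Finset.range e, (U⁻¹) ^ k * W * N₀ ^ k := by
      rw [hXs, Matrix.mul_neg, Matrix.mul_sum]
      congr 1
      refine Finset.sum_congr rfl fun k _ => ?_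
      rw [pow_succ']
      calc U * (U⁻¹ * (U⁻¹) ^ k * W * N₀ ^ k)
          = (U * U⁻¹) * ((U⁻¹) ^ k * W * N₀ ^ k) := by simp only [Matrix.mul_assoc]
        _ = (U⁻¹) ^ k * W * N₀ ^ k := by rw [hUU, Matrix.one_mul]
    have h2 : Xs * N₀ = -∑ k ∈ Finset.range e, (U⁻¹) ^ (k + 1) * W * N₀ ^ (k + 1) := by
      rw [hXs, Matrix.neg_mul, Matrix.sum_mul]
      congr 1
      refine Finset.sum_congr rfl fun k _ => ?_
      rw [pow_succ (N₀) k, ← Matrix.mul_assoc]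
    have h5 : ∑ k ∈ Finset.range e,
        ((U⁻¹) ^ (k + 1) * W * N₀ ^ (k + 1) - (U⁻¹) ^ k * W * N₀ ^ k) = -W := by
      have h3 := Finset.sum_range_sub' (fun k => (U⁻¹) ^ k * W * N₀ ^ k) e
      calc ∑ k ∈ Finset.range e,
            ((U⁻¹) ^ (k + 1) * W * N₀ ^ (k + 1) - (U⁻¹) ^ k * W * N₀ ^ k)
          = -∑ k ∈ Finset.range e,
            ((U⁻¹) ^ k * W * N₀ ^ k - (U⁻¹) ^ (k + 1) * W * N₀ ^ (k + 1)) := by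
            rw [← Finset.sum_neg_distrib]
            exact Finset.sum_congr rfl fun k _ => (neg_sub _ _).symm
        _ = -((U⁻¹) ^ 0 * W * N₀ ^ 0 - (U⁻¹) ^ e * W * N₀ ^ e) := by rw [h3]
        _ = -W := by simp [hN₀e]
    rw [h1, h2, neg_sub_neg, ← Finset.sum_sub_distrib, h5]
  -- block conjugation in the sum-indexed world
  set G1 : Matrix (Fin d ⊕ Fin e) (Fin d ⊕ Fin e) ℂ := Matrix.fromBlocks U W 0 N₀ with hG1
  set Zs : Matrix (Fin d ⊕ Fin e) (Fin d ⊕ Fin e) ℂ := Matrix.fromBlocks 1 Xs 0 1 with hZs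
  set Zsi : Matrix (Fin d ⊕ Fin e) (Fin d ⊕ Fin e) ℂ := Matrix.fromBlocks 1 (-Xs) 0 1 with hZsi
  have hZZ : Zs * Zsi = 1 := by
    rw [hZs, hZsi, Matrix.fromBlocks_multiply]
    simp [Matrix.fromBlocks_one]
  have hZZ' : Zsi * Zs = 1 := by
    rw [hZs, hZsi, Matrix.fromBlocks_multiply]
    simp [Matrix.fromBlocks_one]
  have hconj : Zsi * G1 * Zs = Matrix.fromBlocks U 0 0 N₀ := by
    have hsum : U * Xs + (W - Xs * N₀) = 0 := by
      calc U * Xs + (W - Xs * N₀) = (U * Xs - Xs * N₀) + W := by abel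
        _ = -W + W := by rw [key]
        _ = 0 := by abel
    rw [hG1, hZsi, hZs, Matrix.fromBlocks_multiply, Matrix.fromBlocks_multiply]
    simp only [Matrix.one_mul, Matrix.mul_one, Matrix.mul_zero, Matrix.zero_mul,
      Matrix.neg_mul, add_zero, zero_add, Matrix.mul_neg]
    congr 1
  -- transport along Φ
  have hρmul : ∀ M1 M2 : Matrix (Fin d ⊕ Fin e) (Fin d ⊕ Fin e) ℂ,
      (Matrix.reindex Φ Φ M1) * (Matrix.reindex Φ Φ M2) = Matrix.reindex Φ Φ (M1 * M2) := by
    intro M1 M2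
    simp [Matrix.reindex_apply, Matrix.submatrix_mul_equiv]
  have hρone : (Matrix.reindex Φ Φ) (1 : Matrix (Fin d ⊕ Fin e) (Fin d ⊕ Fin e) ℂ) = 1 := by
    simp [Matrix.reindex_apply, Matrix.submatrix_one_equiv]
  set Zn : Matrix (Fin n) (Fin n) ℂ := Matrix.reindex Φ Φ Zs with hZn
  set Zni : Matrix (Fin n) (Fin n) ℂ := Matrix.reindex Φ Φ Zsi with hZni
  have hZnZ : Zn * Zni = 1 := by rw [hZn, hZni, hρmul, hZZ, hρone]
  have hZnZ' : Zni * Zn = 1 := by rw [hZn, hZni, hρmul, hZZ', hρone]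
  have hEG : Zni * E * Zn = Matrix.reindex Φ Φ (Matrix.fromBlocks U 0 0 N₀) := by
    rw [hEblocks, hZni, hZn, hρmul, hρmul, hconj]
  -- the A side
  have hKA : Ku⁻¹.val * A = z₀ • C - 1 := by
    have hA : A = z₀ • B - Ku.val := by rw [hKu]; simp
    rw [hA, Matrix.mul_sub, Matrix.mul_smul, ← hC, ← Units.val_mul, inv_mul_cancel,
      Units.val_one]
  have hQA : Q⁻¹.val * (Ku⁻¹.val * A) * Q.val = z₀ • E - 1 := by
    rw [hKA, Matrix.mul_sub, Matrix.sub_mul, Matrix.mul_smul, Matrix.smul_mul, Matrix.mul_one,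
      ← Units.val_mul, inv_mul_cancel, Units.val_one, hE]
  have hsw : z₀ • (Matrix.fromBlocks U 0 0 N₀) - 1
      = Matrix.fromBlocks (z₀ • U - 1) (0 : Matrix (Fin d) (Fin e) ℂ)
        (0 : Matrix (Fin e) (Fin d) ℂ) V := by
    rw [hV]
    ext (i | i) (j | j) <;> simp [Matrix.one_apply]
  have hρlin : ∀ M : Matrix (Fin d ⊕ Fin e) (Fin d ⊕ Fin e) ℂ,
      Matrix.reindex Φ Φ (z₀ • M - 1) = z₀ • Matrix.reindex Φ Φ M - 1 := by
    intro M
    ext i j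
    simp only [Matrix.reindex_apply, Matrix.submatrix_apply, Matrix.sub_apply,
      Matrix.smul_apply]
    congr 1
    simp [Matrix.one_apply]
  have hblocksub : z₀ • Matrix.reindex Φ Φ (Matrix.fromBlocks U 0 0 N₀)
      - (1 : Matrix (Fin n) (Fin n) ℂ)
      = Matrix.reindex Φ Φ (Matrix.fromBlocks (z₀ • U - 1) 0 0 V) := by
    rw [← hρlin, hsw]
  have hZA : Zni * (z₀ • E - 1) * Zn
      = Matrix.reindex Φ Φ (Matrix.fromBlocks (z₀ • U - 1) 0 0 V) := by
    rw [Matrix.mul_sub, Matrix.sub_mul, Matrix.mul_smul, Matrix.smul_mul, Matrix.mul_one,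
      hZnZ', hEG, hblocksub]
  -- final data
  set Mlft : Matrix (Fin n) (Fin n) ℂ :=
    Matrix.reindex Φ Φ (Matrix.fromBlocks U⁻¹ 0 0 V⁻¹) with hMlft
  set Mrgt : Matrix (Fin n) (Fin n) ℂ :=
    Matrix.reindex Φ Φ (Matrix.fromBlocks U 0 0 V) with hMrgt
  have hMM : Mlft * Mrgt = 1 := by
    rw [hMlft, hMrgt, hρmul, Matrix.fromBlocks_multiply]
    simp only [Matrix.mul_zero, Matrix.zero_mul, add_zero, zero_add, hUU', hVV']
    rw [Matrix.fromBlocks_one, hρone]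
  have hMM' : Mrgt * Mlft = 1 := by
    rw [hMlft, hMrgt, hρmul, Matrix.fromBlocks_multiply]
    simp only [Matrix.mul_zero, Matrix.zero_mul, add_zero, zero_add, hUU, hVV]
    rw [Matrix.fromBlocks_one, hρone]
  set S : Matrix (Fin n) (Fin n) ℂ := Q.val * Zn with hS
  set T : Matrix (Fin n) (Fin n) ℂ := Mlft * Zni * Q⁻¹.val * Ku⁻¹.val with hT
  set J : Matrix (Fin d) (Fin d) ℂ := U⁻¹ * (z₀ • U - 1) with hJ
  have hJt : J.BlockTriangular id := by
    refine (Matrix.blockTriangular_inv_of_blockTriangular hUt).mul ?_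
    intro i j hij
    have h2 : i ≠ j := fun hh => absurd hij (by rw [hh]; exact lt_irrefl _)
    simp [hUt hij, Matrix.one_apply_ne h2]
  have hSu : IsUnit S := by
    refine (Q.isUnit).mul ?_
    exact ⟨⟨Zn, Zni, hZnZ, hZnZ'⟩, rfl⟩
  have hTu : IsUnit T := by
    refine (((?_ : IsUnit Mlft).mul ?_).mul (Q⁻¹.isUnit)).mul (Ku⁻¹.isUnit)
    · exact ⟨⟨Mlft, Mrgt, hMM, hMM'⟩, rfl⟩
    · exact ⟨⟨Zni, Zn, hZnZ', hZnZ⟩, rfl⟩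
  have hTA : T * A * S = Matrix.reindex Φ Φ (Matrix.fromBlocks J 0 0 1) := by
    have hassoc : T * A * S = Mlft * (Zni * (Q⁻¹.val * (Ku⁻¹.val * A) * Q.val) * Zn) := by
      rw [hT, hS]
      simp only [Matrix.mul_assoc]
    rw [hassoc, hQA, hZA, hMlft, hρmul, Matrix.fromBlocks_multiply]
    simp only [Matrix.mul_zero, Matrix.zero_mul, add_zero, zero_add, hVV', ← hJ]
  have hTB : T * B * S = Matrix.reindex Φ Φ (Matrix.fromBlocks 1 0 0 N) := by
    have hassoc : T * B * S = Mlft * (Zni * (Q⁻¹.val * (Ku⁻¹.val * B) * Q.val) * Zn) := by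
      rw [hT, hS]
      simp only [Matrix.mul_assoc]
    rw [hassoc, ← hC, ← hE, hEG, hMlft, hρmul, Matrix.fromBlocks_multiply]
    simp only [Matrix.mul_zero, Matrix.zero_mul, add_zero, zero_add, hUU', ← hN]
  exact ⟨d, hd, S, T, J, N, hSu, hTu, hJt, hNt, hNnil, hTA, hTB⟩
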